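/- The reverse of the relation →₀ ∪ →ℐ on formulas is well-founded; in particular, there is no infinite sequence F₀, F₁, F₂, … of formulas in which each step Fᵢ to Fᵢ₊₁ is either a vacuous-quantifier rewrite step or an innermost rewrite step. -/
import Mathlib


mutual
  /-- Terms of first-order logic extended with Hilbert's ε-operator,
  in de Bruijn representation (so formulas are automatically identified up
  to renaming of bound variables). -/
  inductive Tm : Type
    | var : ℕ → Tm
    | fn : ℕ → (k : ℕ) → (Fin k → Tm) → Tm
    | eps : Fm → Tm
  /-- Formulas; `ex F`, `all F` and `Tm.eps F` bind de Bruijn index 0 of `F`. -/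
  inductive Fm : Type
    | pred : ℕ → (k : ℕ) → (Fin k → Tm) → Fm
    | not : Fm → Fm
    | or : Fm → Fm → Fm
    | and : Fm → Fm → Fm
    | imp : Fm → Fm → Fm
    | ex : Fm → Fm
    | all : Fm → Fm
end

/-- Lifting a renaming under a binder. -/
def upRen (r : ℕ → ℕ) : ℕ → ℕ
  | 0 => 0
  | n + 1 => r n + 1

mutual
  /-- Renaming of free variables in a term. -/
  def renT (r : ℕ → ℕ) : Tm → Tm
    | .var i => .var (r i)
    | .fn f k a => .fn f k (fun i => renT r (a i))
    | .eps F => .eps (renF (upRen r) F)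
  /-- Renaming of free variables in a formula. -/
  def renF (r : ℕ → ℕ) : Fm → Fm
    | .pred p k a => .pred p k (fun i => renT r (a i))
    | .not F => .not (renF r F)
    | .or F G => .or (renF r F) (renF r G)
    | .and F G => .and (renF r F) (renF r G)
    | .imp F G => .imp (renF r F) (renF r G)
    | .ex F => .ex (renF (upRen r) F)
    | .all F => .all (renF (upRen r) F)
end

/-- Lifting a substitution under a binder. -/
def upSub (σ : ℕ → Tm) : ℕ → Tm
  | 0 => .var 0
  | n + 1 => renT Nat.succ (σ n)

mutual
  /-- Capture-avoiding simultaneous substitution on terms. -/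
  def subT (σ : ℕ → Tm) : Tm → Tm
    | .var i => σ i
    | .fn f k a => .fn f k (fun i => subT σ (a i))
    | .eps F => .eps (subF (upSub σ) F)
  /-- Capture-avoiding simultaneous substitution on formulas. -/
  def subF (σ : ℕ → Tm) : Fm → Fm
    | .pred p k a => .pred p k (fun i => subT σ (a i))
    | .not F => .not (subF σ F)
    | .or F G => .or (subF σ F) (subF σ G)
    | .and F G => .and (subF σ F) (subF σ G)
    | .imp F G => .imp (subF σ F) (subF σ G)
    | .ex F => .ex (subF (upSub σ) F)
    | .all F => .all (subF (upSub σ) F)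
end

/-- `inst1 F t` is `F{x ↦ t}` for the variable `x` bound just outside `F`
(de Bruijn index 0). -/
def inst1 (F : Fm) (t : Tm) : Fm :=
  subF (fun n => match n with | 0 => t | n + 1 => .var n) F

mutual
  /-- The variable with de Bruijn index `n` occurs free in the term. -/
  def freeT (n : ℕ) : Tm → Prop
    | .var i => i = n
    | .fn _ _ a => ∃ i, freeT n (a i)
    | .eps F => freeF (n + 1) F
  /-- The variable with de Bruijn index `n` occurs free in the formula. -/
  def freeF (n : ℕ) : Fm → Prop
    | .pred _ _ a => ∃ i, freeT n (a i)
    | .not F => freeF n F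
    | .or F G => freeF n F ∨ freeF n G
    | .and F G => freeF n F ∨ freeF n G
    | .imp F G => freeF n F ∨ freeF n G
    | .ex F => freeF (n + 1) F
    | .all F => freeF (n + 1) F
end

mutual
  /-- Number of occurrences of quantifiers (∃ and ∀, but not ε) in a term. -/
  def qcT : Tm → ℕ
    | .var _ => 0
    | .fn _ _ a => ∑ i, qcT (a i)
    | .eps F => qcF F
  /-- Number of occurrences of quantifiers (∃ and ∀, but not ε) in a formula. -/
  def qcF : Fm → ℕ
    | .pred _ _ a => ∑ i, qcT (a i)
    | .not F => qcF F
    | .or F G => qcF F + qcF G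
    | .and F G => qcF F + qcF G
    | .imp F G => qcF F + qcF G
    | .ex F => qcF F + 1
    | .all F => qcF F + 1
end

/-- Quantifier symbols. -/
inductive Quant : Type
  | ex
  | all

/-- `mkQ Q A` is the quantified formula `Qx. A`. -/
def mkQ : Quant → Fm → Fm
  | .ex, A => .ex A
  | .all, A => .all A

/-- `negQ Q A` is `¬^Q A`: `¬A` for `Q = ∀` and `A` for `Q = ∃`. -/
def negQ : Quant → Fm → Fm
  | .ex, A => A
  | .all, A => .not A

/-- `qeRedex Q A` is `A{x ↦ εx. ¬^Q A}`, the contractum of the redex `Qx. A`. -/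
def qeRedex (Q : Quant) (A : Fm) : Fm := inst1 A (.eps (negQ Q A))

mutual
  /-- One rewrite step inside a term, where each rewritten quantified subformula
  `Qx. A` is required to satisfy the side condition `P A`. -/
  inductive StepT (P : Fm → Prop) : Tm → Tm → Prop
    | fn {f k} {a : Fin k → Tm} {j : Fin k} {t' : Tm} :
        StepT P (a j) t' → StepT P (.fn f k a) (.fn f k (Function.update a j t'))
    | eps {F F'} : StepF P F F' → StepT P (.eps F) (.eps F')
  /-- One rewrite step on formulas: replace one occurrence of a subformula
  `Qx. A` (with `P A`) by `A{x ↦ εx. ¬^Q A}`. -/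
  inductive StepF (P : Fm → Prop) : Fm → Fm → Prop
    | root {Q A} : P A → StepF P (mkQ Q A) (qeRedex Q A)
    | pred {p k} {a : Fin k → Tm} {j : Fin k} {t' : Tm} :
        StepT P (a j) t' → StepF P (.pred p k a) (.pred p k (Function.update a j t'))
    | not {F F'} : StepF P F F' → StepF P (.not F) (.not F')
    | orL {F F' G} : StepF P F F' → StepF P (.or F G) (.or F' G)
    | orR {F G G'} : StepF P G G' → StepF P (.or F G) (.or F G')
    | andL {F F' G} : StepF P F F' → StepF P (.and F G) (.and F' G)
    | andR {F G G'} : StepF P G G' → StepF P (.and F G) (.and F G')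
    | impL {F F' G} : StepF P F F' → StepF P (.imp F G) (.imp F' G)
    | impR {F G G'} : StepF P G G' → StepF P (.imp F G) (.imp F G')
    | ex {F F'} : StepF P F F' → StepF P (.ex F) (.ex F')
    | all {F F'} : StepF P F F' → StepF P (.all F) (.all F')
end

/-- The quantifier-elimination rewrite relation `→` on formulas. -/
def Step : Fm → Fm → Prop := StepF (fun _ => True)

/-- `→₀`: the steps rewriting a vacuous quantifier (bound variable not free in the body). -/
def Step0 : Fm → Fm → Prop := StepF (fun A => ¬ freeF 0 A)

/-- `→₁`: the steps rewriting a non-vacuous quantifier. -/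
def Step1 : Fm → Fm → Prop := StepF (fun A => freeF 0 A)

/-- `→ℐ`: the innermost steps, whose rewritten subformula `Qx. A` contains no
quantifier other than the outermost `Q`. -/
def StepI : Fm → Fm → Prop := StepF (fun A => qcF A = 0)



section Aux

mutual
theorem qc_renT (r : ℕ → ℕ) : ∀ t, qcT (renT r t) = qcT t
  | .var _ => rfl
  | .fn f k a => by
      simp only [renT, qcT]
      exact Finset.sum_congr rfl (fun i _ => qc_renT r (a i))
  | .eps F => qc_renF (upRen r) F
theorem qc_renF (r : ℕ → ℕ) : ∀ F, qcF (renF r F) = qcF F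
  | .pred p k a => by
      simp only [renF, qcF]
      exact Finset.sum_congr rfl (fun i _ => qc_renT r (a i))
  | .not F => qc_renF r F
  | .or F G => by simp only [renF, qcF, qc_renF r F, qc_renF r G]
  | .and F G => by simp only [renF, qcF, qc_renF r F, qc_renF r G]
  | .imp F G => by simp only [renF, qcF, qc_renF r F, qc_renF r G]
  | .ex F => by simp only [renF, qcF, qc_renF (upRen r) F]
  | .all F => by simp only [renF, qcF, qc_renF (upRen r) F]
end

theorem upSub_qc {σ : ℕ → Tm} {F : Fm}
    (h : ∀ n, freeF (n + 1) F → qcT (σ n) = 0) :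
    ∀ n, freeF n F → qcT (upSub σ n) = 0 := by
  intro n hn
  cases n with
  | zero => rfl
  | succ m =>
      show qcT (renT Nat.succ (σ m)) = 0
      rw [qc_renT]
      exact h m hn

mutual
theorem qc_subT (σ : ℕ → Tm) :
    ∀ t, (∀ n, freeT n t → qcT (σ n) = 0) → qcT (subT σ t) = qcT t
  | .var i, h => h i rfl
  | .fn f k a, h => by
      simp only [subT, qcT]
      exact Finset.sum_congr rfl (fun i _ => qc_subT σ (a i) (fun n hn => h n ⟨i, hn⟩))
  | .eps F, h => qc_subF (upSub σ) F (upSub_qc (fun n hn => h n hn))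
theorem qc_subF (σ : ℕ → Tm) :
    ∀ F, (∀ n, freeF n F → qcT (σ n) = 0) → qcF (subF σ F) = qcF F
  | .pred p k a, h => by
      simp only [subF, qcF]
      exact Finset.sum_congr rfl (fun i _ => qc_subT σ (a i) (fun n hn => h n ⟨i, hn⟩))
  | .not F, h => qc_subF σ F h
  | .or F G, h => by
      simp only [subF, qcF, qc_subF σ F (fun n hn => h n (Or.inl hn)),
        qc_subF σ G (fun n hn => h n (Or.inr hn))]
  | .and F G, h => by
      simp only [subF, qcF, qc_subF σ F (fun n hn => h n (Or.inl hn)),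
        qc_subF σ G (fun n hn => h n (Or.inr hn))]
  | .imp F G, h => by
      simp only [subF, qcF, qc_subF σ F (fun n hn => h n (Or.inl hn)),
        qc_subF σ G (fun n hn => h n (Or.inr hn))]
  | .ex F, h => by
      simp only [subF, qcF, qc_subF (upSub σ) F (upSub_qc (fun n hn => h n hn))]
  | .all F, h => by
      simp only [subF, qcF, qc_subF (upSub σ) F (upSub_qc (fun n hn => h n hn))]
end

theorem qc_negQ (Q : Quant) (A : Fm) : qcF (negQ Q A) = qcF A := by
  cases Q <;> rfl

theorem qc_mkQ (Q : Quant) (A : Fm) : qcF (mkQ Q A) = qcF A + 1 := by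
  cases Q <;> rfl

/-- Side condition covering both `Step0` and `StepI`. -/
def Good (P : Fm → Prop) : Prop := ∀ Q A, P A → qcF (qeRedex Q A) ≤ qcF A

theorem good_step0 : Good (fun A => ¬ freeF 0 A) := by
  intro Q A hA
  have : qcF (qeRedex Q A) = qcF A := by
    apply qc_subF
    intro n hn
    cases n with
    | zero => exact absurd hn hA
    | succ m => rfl
  omega

theorem good_stepI : Good (fun A => qcF A = 0) := by
  intro Q A hA
  have : qcF (qeRedex Q A) = qcF A := by
    apply qc_subF
    intro n hn
    cases n with
    | zero => show qcF (negQ Q A) = 0; rw [qc_negQ]; exact hA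
    | succ m => rfl
  omega

theorem sum_update_lt {k} (a : Fin k → Tm) (j : Fin k) {t' : Tm} (h : qcT t' < qcT (a j)) :
    ∑ i, qcT (Function.update a j t' i) < ∑ i, qcT (a i) := by
  classical
  have e : ∀ i, qcT (Function.update a j t' i) = Function.update (fun i => qcT (a i)) j (qcT t') i :=
    fun i => Function.apply_update (fun _ t => qcT t) a j t' i
  rw [Finset.sum_congr rfl (fun i _ => e i),
    Finset.sum_update_of_mem (Finset.mem_univ j),
    ← Finset.add_sum_erase Finset.univ (fun i => qcT (a i)) (Finset.mem_univ j),
    Finset.sdiff_singleton_eq_erase]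
  omega

theorem qc_stepF {P : Fm → Prop} (hP : Good P) {F F' : Fm} (h : StepF P F F') :
    qcF F' < qcF F := by
  induction h using StepF.rec (motive_1 := fun t t' _ => qcT t' < qcT t) with
  | root hA =>
      rename_i Q A
      have := hP Q A hA
      rw [qc_mkQ]; omega
  | fn _ ih => simp only [qcT]; exact sum_update_lt _ _ ih
  | eps _ ih => simpa only [qcT] using ih
  | pred _ ih => simp only [qcF]; exact sum_update_lt _ _ ih
  | not _ ih => simpa only [qcF] using ih
  | orL _ ih => simp only [qcF]; omega
  | orR _ ih => simp only [qcF]; omega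
  | andL _ ih => simp only [qcF]; omega
  | andR _ ih => simp only [qcF]; omega
  | impL _ ih => simp only [qcF]; omega
  | impR _ ih => simp only [qcF]; omega
  | ex _ ih => simp only [qcF]; omega
  | all _ ih => simp only [qcF]; omega

theorem qc_dec {F G : Fm} (h : Step0 F G ∨ StepI F G) : qcF G < qcF F := by
  rcases h with h | h
  · exact qc_stepF good_step0 h
  · exact qc_stepF good_stepI h

end Aux

/-- the reverse of `→₀ ∪ →ℐ` is well-founded; in particular
there is no infinite sequence of `→₀`- or `→ℐ`-steps. -/
theorem stmt10 :
    WellFounded (fun G F : Fm => Step0 F G ∨ StepI F G) ∧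
    ¬ ∃ f : ℕ → Fm, ∀ i : ℕ, Step0 (f i) (f (i + 1)) ∨ StepI (f i) (f (i + 1)) := by
  constructor
  · exact Subrelation.wf (fun h => qc_dec h) (InvImage.wf qcF Nat.lt_wfRel.wf)
  · rintro ⟨f, hf⟩
    have hd : ∀ i, qcF (f (i + 1)) < qcF (f i) := fun i => qc_dec (hf i)
    have key : ∀ n, qcF (f n) + n ≤ qcF (f 0) := by
      intro n
      induction n with
      | zero => simp
      | succ m ih => have := hd m; omega
    have := key (qcF (f 0) + 1)
    omega
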